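/- Let E be a full heap over A, where P is finite, and let F, F' be proper ideals of E. Then there exist r in N and vertices m_1, ..., m_r in P such that F' = S_{m_1}(S_{m_2}( ... S_{m_r}(F) ... )), such that each partial image G_j = S_{m_j}(S_{m_{j+1}}( ... S_{m_r}(F) ... )) differs from the previous one by adding or removing a single element of E (their symmetric difference is a singleton), and such that for each i the standard basis vector e_{m_i} appears with nonzero coefficient in chi(F, F'). -/

import Mathlib

/-- Two vertices of the Dynkin diagram are adjacent if they are distinct
and the corresponding entry of the generalized Cartan matrix is nonzero. -/
def Adj {P : Type*} (A : P → P → ℤ) (p q : P) : Prop := p ≠ q ∧ A p q ≠ 0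

/-- A generalized Cartan matrix with all entries in {2, 0, -1, -2}. -/
def IsGCM {P : Type*} (A : P → P → ℤ) : Prop :=
  (∀ p, A p p = 2) ∧ (∀ p q, p ≠ q → A p q ≤ 0) ∧
  (∀ p q, (A p q = 0 ↔ A q p = 0)) ∧
  (∀ p q, A p q = 2 ∨ A p q = 0 ∨ A p q = -1 ∨ A p q = -2)

/-- An ideal (downward-closed subset) of a partially ordered set. -/
def IsIdeal {E : Type*} [PartialOrder E] (F : Set E) : Prop :=
  ∀ ⦃x : E⦄, x ∈ F → ∀ ⦃y : E⦄, y ≤ x → y ∈ F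

/-- A proper ideal: an ideal meeting each fibre `eps ⁻¹ {p}` in a nonempty
proper subset. -/
def IsProperIdeal {P E : Type*} [PartialOrder E] (eps : E → P) (F : Set E) : Prop :=
  IsIdeal F ∧ ∀ p : P, (∃ a, eps a = p ∧ a ∈ F) ∧ (∃ a, eps a = p ∧ a ∉ F)

/-- A full heap over the generalized Cartan matrix `A` with labelling map `eps`.
Local finiteness is expressed by the `LocallyFiniteOrder` instance. -/
structure IsFullHeap {P E : Type*} [PartialOrder E] [LocallyFiniteOrder E]
    (A : P → P → ℤ) (eps : E → P) : Prop where
  /-- elements with equal or adjacent labels are comparable -/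
  comparable : ∀ a b : E, (eps a = eps b ∨ Adj A (eps a) (eps b)) → a ≤ b ∨ b ≤ a
  /-- the order is the reflexive-transitive closure of its restriction to
  pairs with equal or adjacent labels -/
  le_generated : ∀ a b : E, a ≤ b ↔
    Relation.ReflTransGen (fun x y : E => x ≤ y ∧ (eps x = eps y ∨ Adj A (eps x) (eps y))) a b
  /-- each fibre is unbounded above in E -/
  unbounded_above : ∀ (p : P) (a : E), ∃ b, eps b = p ∧ ¬ b ≤ a
  /-- each fibre is unbounded below in E -/
  unbounded_below : ∀ (p : P) (a : E), ∃ b, eps b = p ∧ ¬ a ≤ b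
  /-- covering elements with adjacent labels exist -/
  covers : ∀ p p' : P, Adj A p p' → ∀ a : E, eps a = p →
    ∃ b, eps b = p' ∧ (a ⋖ b ∨ b ⋖ a)
  /-- the defining condition on open intervals between consecutive elements
  of a fibre -/
  interval : ∀ a b : E, a < b → eps a = eps b →
    (∀ c, a < c → c < b → eps c ≠ eps a) →
    (∑ c ∈ Finset.Ioo a b, A (eps a) (eps c)) = -2

/-- The character of a pair of proper ideals:
`chi(F, F')(p) = |(F' \ F) ∩ eps⁻¹(p)| - |(F \ F') ∩ eps⁻¹(p)|`. -/
noncomputable def chiFn {P E : Type*} (eps : E → P) (F F' : Set E) : P → ℤ :=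
  fun p => (((F' \ F) ∩ eps ⁻¹' {p}).ncard : ℤ) - (((F \ F') ∩ eps ⁻¹' {p}).ncard : ℤ)

open Classical in
/-- The operator `S_p` on ideals: remove the (unique) element of label `p`
that can be removed, else add the (unique) element of label `p` that can be
added, else do nothing. -/
noncomputable def Sact {P E : Type*} [PartialOrder E] (eps : E → P) (p : P) (I : Set E) :
    Set E :=
  if h : ∃ a, a ∈ I ∧ eps a = p ∧ IsIdeal (I \ {a}) then I \ {h.choose}
  else if h' : ∃ a, a ∉ I ∧ eps a = p ∧ IsIdeal (I ∪ {a}) then I ∪ {h'.choose}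
  else I

/-- The defining relations of the Weyl group of a (doubly laced)
generalized Cartan matrix. -/
def weylRels {P : Type*} (A : P → P → ℤ) : Set (FreeGroup P) :=
  {r | (∃ p, r = FreeGroup.of p ^ 2) ∨
       (∃ p q, A p q = 0 ∧ r = (FreeGroup.of p * FreeGroup.of q) ^ 2) ∨
       (∃ p q, A p q * A q p = 1 ∧ r = (FreeGroup.of p * FreeGroup.of q) ^ 3) ∨
       (∃ p q, A p q * A q p = 2 ∧ r = (FreeGroup.of p * FreeGroup.of q) ^ 4)}

/-- The Weyl group of a generalized Cartan matrix, as a presented group. -/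
abbrev WeylGroup {P : Type*} (A : P → P → ℤ) := PresentedGroup (weylRels A)

/-- The reflection `s_p` in the reflection representation on `ℤ^P`:
`s_p(v) = v - (∑ q, a_{pq} v_q) e_p`. -/
def reflAct {P : Type*} [Fintype P] [DecidableEq P] (A : P → P → ℤ) (p : P) (v : P → ℤ) :
    P → ℤ :=
  fun r => if r = p then v p - ∑ q, A p q * v q else v r

/-- `A` is of affine type: indecomposable, and `A δ = 0` for some positive
integer vector `δ`. -/
def IsAffine {P : Type*} [Fintype P] (A : P → P → ℤ) : Prop :=
  (∀ p q : P, Relation.ReflTransGen (Adj A) p q) ∧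
  ∃ δ : P → ℤ, (∀ p, 0 < δ p) ∧ ∀ p, (∑ q, A p q * δ q) = 0

section StmtTwoHelpers

variable {P E : Type*} [PartialOrder E]

lemma isIdeal_diff_singleton_iff {F : Set E} (hF : IsIdeal F) {a : E} :
    IsIdeal (F \ {a}) ↔ ∀ x ∈ F, ¬ a < x := by
  constructor
  · intro h x hx hax
    have hx' : x ∈ F \ {a} := ⟨hx, fun h' => (ne_of_gt hax) (by simpa using h')⟩
    exact (h hx' hax.le).2 rfl
  · intro h x hx y hyx
    refine ⟨hF hx.1 hyx, fun hy => ?_⟩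
    have hya : y = a := hy
    subst hya
    exact h x hx.1 (lt_of_le_of_ne hyx (fun e => hx.2 e.symm))

lemma isIdeal_union_singleton_iff {F : Set E} (hF : IsIdeal F) {b : E} :
    IsIdeal (F ∪ {b}) ↔ ∀ y, y < b → y ∈ F ∪ {b} := by
  constructor
  · intro h y hyb
    exact h (x := b) (Or.inr rfl) hyb.le
  · intro h x hx y hyx
    rcases hx with hx | hx
    · exact Or.inl (hF hx hyx)
    · have hxb : x = b := hx
      subst hxb
      rcases eq_or_lt_of_le hyx with e | l
      · exact Or.inr e
      · exact h y l

lemma isIdeal_union_singleton_of_lt {F : Set E} (hF : IsIdeal F) {b : E}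
    (h : ∀ y, y < b → y ∈ F) : IsIdeal (F ∪ {b}) :=
  (isIdeal_union_singleton_iff hF).mpr (fun y hy => Or.inl (h y hy))

variable [LocallyFiniteOrder E] {A : P → P → ℤ} {eps : E → P}

lemma Sact_eq_remove (hE : IsFullHeap A eps) {F : Set E} (hF : IsIdeal F) {β : E}
    (hβF : β ∈ F) (hid : IsIdeal (F \ {β})) : Sact eps (eps β) F = F \ {β} := by
  have h : ∃ a, a ∈ F ∧ eps a = eps β ∧ IsIdeal (F \ {a}) := ⟨β, hβF, rfl, hid⟩
  rw [Sact, dif_pos h]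
  obtain ⟨ha, hae, haid⟩ := h.choose_spec
  have hmax := (isIdeal_diff_singleton_iff hF).mp haid
  have hmaxβ := (isIdeal_diff_singleton_iff hF).mp hid
  have hcβ : h.choose = β := by
    rcases hE.comparable h.choose β (Or.inl hae) with hle | hle
    · exact (eq_or_lt_of_le hle).resolve_right (hmax β hβF)
    · exact ((eq_or_lt_of_le hle).resolve_right (hmaxβ _ ha)).symm
  rw [hcβ]

lemma Sact_eq_add (hE : IsFullHeap A eps) {F : Set E} {β : E}
    (hβF : β ∉ F) (hid : IsIdeal (F ∪ {β}))
    (hno : ¬ ∃ a, a ∈ F ∧ eps a = eps β ∧ IsIdeal (F \ {a})) :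
    Sact eps (eps β) F = F ∪ {β} := by
  have h' : ∃ a, a ∉ F ∧ eps a = eps β ∧ IsIdeal (F ∪ {a}) := ⟨β, hβF, rfl, hid⟩
  rw [Sact, dif_neg hno, dif_pos h']
  obtain ⟨ha, hae, haid⟩ := h'.choose_spec
  have hcβ : h'.choose = β := by
    rcases hE.comparable h'.choose β (Or.inl hae) with hle | hle
    · rcases hid (x := β) (Or.inr rfl) hle with h1 | h1
      · exact absurd h1 ha
      · exact h1
    · rcases haid (x := h'.choose) (Or.inr rfl) hle with h1 | h1
      · exact absurd h1 hβF
      · exact h1.symm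
  rw [hcβ]

/-- In a full heap, the differences `F \ F'` and `F' \ F` cannot both meet the same fibre. -/
lemma not_both_diffs (hE : IsFullHeap A eps) {F F' : Set E}
    (hF : IsIdeal F) (hF' : IsIdeal F') {x y : E}
    (hx : x ∈ F \ F') (hy : y ∈ F' \ F) (he : eps x = eps y) : False := by
  rcases hE.comparable x y (Or.inl he) with h | h
  · exact hx.2 (hF' hy.1 h)
  · exact hy.2 (hF hx.1 h)

lemma chi_ne_zero (hE : IsFullHeap A eps) {F F' : Set E}
    (hF : IsIdeal F) (hF' : IsIdeal F') (hfin : (symmDiff F F').Finite)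
    {β : E} (hβ : β ∈ symmDiff F F') : chiFn eps F F' (eps β) ≠ 0 := by
  have hfin1 : ((F' \ F) ∩ eps ⁻¹' {eps β}).Finite :=
    hfin.subset (fun x hx => Set.mem_symmDiff.mpr (Or.inr ⟨hx.1.1, hx.1.2⟩))
  have hfin2 : ((F \ F') ∩ eps ⁻¹' {eps β}).Finite :=
    hfin.subset (fun x hx => Set.mem_symmDiff.mpr (Or.inl ⟨hx.1.1, hx.1.2⟩))
  rcases Set.mem_symmDiff.mp hβ with ⟨hβF, hβF'⟩ | ⟨hβF', hβF⟩
  · have hS1 : (F' \ F) ∩ eps ⁻¹' {eps β} = ∅ := by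
      ext y
      simp only [Set.mem_inter_iff, Set.mem_diff, Set.mem_preimage, Set.mem_singleton_iff,
        Set.mem_empty_iff_false, iff_false, not_and]
      rintro ⟨hy1, hy2⟩ hy3
      exact not_both_diffs hE hF hF' ⟨hβF, hβF'⟩ ⟨hy1, hy2⟩ hy3.symm
    have hpos : 0 < ((F \ F') ∩ eps ⁻¹' {eps β}).ncard :=
      (Set.ncard_pos hfin2).mpr ⟨β, ⟨hβF, hβF'⟩, rfl⟩
    unfold chiFn
    rw [hS1]
    simp only [Set.ncard_empty, Nat.cast_zero]
    omega
  · have hS2 : (F \ F') ∩ eps ⁻¹' {eps β} = ∅ := by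
      ext y
      simp only [Set.mem_inter_iff, Set.mem_diff, Set.mem_preimage, Set.mem_singleton_iff,
        Set.mem_empty_iff_false, iff_false, not_and]
      rintro ⟨hy1, hy2⟩ hy3
      exact not_both_diffs hE hF hF' ⟨hy1, hy2⟩ ⟨hβF', hβF⟩ hy3
    have hpos : 0 < ((F' \ F) ∩ eps ⁻¹' {eps β}).ncard :=
      (Set.ncard_pos hfin1).mpr ⟨β, ⟨hβF', hβF⟩, rfl⟩
    unfold chiFn
    rw [hS2]
    simp only [Set.ncard_empty, Nat.cast_zero]
    omega

lemma diff_fiber_finite (hE : IsFullHeap A eps) {F F' : Set E}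
    (hF : IsProperIdeal eps F) (hF' : IsProperIdeal eps F') (p : P) :
    ((F \ F') ∩ eps ⁻¹' {p}).Finite := by
  obtain ⟨y, hy1, hy2⟩ := (hF'.2 p).1
  obtain ⟨z, hz1, hz2⟩ := (hF.2 p).2
  apply Set.Finite.subset (Set.finite_Ioo y z)
  rintro x ⟨⟨hxF, hxF'⟩, hxp⟩
  simp only [Set.mem_preimage, Set.mem_singleton_iff] at hxp
  constructor
  · rcases hE.comparable x y (Or.inl (by rw [hxp, hy1])) with h | h
    · exact absurd (hF'.1 hy2 h) hxF'
    · exact lt_of_le_of_ne h (fun e => hxF' (e ▸ hy2))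
  · rcases hE.comparable x z (Or.inl (by rw [hxp, hz1])) with h | h
    · exact lt_of_le_of_ne h (fun e => hz2 (e ▸ hxF))
    · exact absurd (hF.1 hxF h) hz2

lemma symmDiff_finite [Fintype P] (hE : IsFullHeap A eps) {F F' : Set E}
    (hF : IsProperIdeal eps F) (hF' : IsProperIdeal eps F') :
    (symmDiff F F').Finite := by
  have hdecomp : symmDiff F F'
      = ⋃ p : P, ((F \ F') ∩ eps ⁻¹' {p}) ∪ ((F' \ F) ∩ eps ⁻¹' {p}) := by
    ext x
    simp only [Set.mem_symmDiff, Set.mem_iUnion, Set.mem_union, Set.mem_inter_iff,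
      Set.mem_diff, Set.mem_preimage, Set.mem_singleton_iff]
    constructor
    · rintro (⟨h1, h2⟩ | ⟨h1, h2⟩)
      · exact ⟨eps x, Or.inl ⟨⟨h1, h2⟩, rfl⟩⟩
      · exact ⟨eps x, Or.inr ⟨⟨h1, h2⟩, rfl⟩⟩
    · rintro ⟨p, (⟨⟨h1, h2⟩, -⟩ | ⟨⟨h1, h2⟩, -⟩)⟩
      · exact Or.inl ⟨h1, h2⟩
      · exact Or.inr ⟨h1, h2⟩
  rw [hdecomp]
  exact Set.finite_iUnion
    (fun p => (diff_fiber_finite hE hF hF' p).union (diff_fiber_finite hE hF' hF p))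

/-- The key one-step lemma: if `F ≠ F'`, some single application of `Sact`
moves `F` one element closer to `F'`. -/
lemma step_lemma (hA : IsGCM A) (hE : IsFullHeap A eps)
    {F F' : Set E} (hF : IsIdeal F) (hF' : IsProperIdeal eps F')
    (hfin : (symmDiff F F').Finite) (hne : F ≠ F') :
    ∃ (β : E) (G : Set E), Sact eps (eps β) F = G ∧ IsIdeal G ∧
      β ∈ symmDiff F F' ∧ symmDiff G F = {β} ∧ symmDiff G F' = symmDiff F F' \ {β} := by
  by_cases hFF' : (F \ F').Nonempty
  · -- removal case: take β maximal in F \ F'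
    have hdfin : (F \ F').Finite :=
      hfin.subset (fun x hx => Set.mem_symmDiff.mpr (Or.inl ⟨hx.1, hx.2⟩))
    obtain ⟨β, hβmem, hβmax⟩ : ∃ a ∈ F \ F', ∀ a' ∈ F \ F', id a ≤ id a' → id a = id a' := by
      obtain ⟨a, ha, h⟩ := Set.Finite.exists_maximalFor id (F \ F') hdfin hFF'
      exact ⟨a, ha, fun a' ha' hle => le_antisymm hle (h ha' hle)⟩
    have hmax : ∀ x ∈ F, ¬ β < x := by
      intro x hx hlt
      by_cases hx' : x ∈ F'
      · exact hβmem.2 (hF'.1 hx' hlt.le)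
      · exact hlt.ne (hβmax x ⟨hx, hx'⟩ hlt.le)
    have hid : IsIdeal (F \ {β}) := (isIdeal_diff_singleton_iff hF).mpr hmax
    refine ⟨β, F \ {β}, Sact_eq_remove hE hF hβmem.1 hid, hid,
      Set.mem_symmDiff.mpr (Or.inl ⟨hβmem.1, hβmem.2⟩), ?_, ?_⟩
    · ext x
      constructor
      · intro hmem
        rcases Set.mem_symmDiff.mp hmem with ⟨hx1, hx2⟩ | ⟨hx1, hx2⟩
        · exact absurd hx1.1 hx2
        · rw [Set.mem_singleton_iff]
          by_contra hne'
          exact hx2 ⟨hx1, fun h => hne' (Set.mem_singleton_iff.mp h)⟩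
      · intro hmem
        rw [Set.mem_singleton_iff] at hmem
        subst hmem
        exact Set.mem_symmDiff.mpr (Or.inr ⟨hβmem.1, fun h => h.2 rfl⟩)
    · ext x
      by_cases hx : x = β
      · subst hx
        constructor
        · intro hmem
          rcases Set.mem_symmDiff.mp hmem with ⟨hx1, -⟩ | ⟨hx1, -⟩
          · exact absurd rfl hx1.2
          · exact absurd hx1 hβmem.2
        · rintro ⟨-, h2⟩
          exact absurd rfl h2
      · constructor
        · intro hmem
          rcases Set.mem_symmDiff.mp hmem with ⟨hx1, hx2⟩ | ⟨hx1, hx2⟩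
          · exact ⟨Set.mem_symmDiff.mpr (Or.inl ⟨hx1.1, hx2⟩),
              fun h => hx (Set.mem_singleton_iff.mp h)⟩
          · exact ⟨Set.mem_symmDiff.mpr (Or.inr ⟨hx1,
              fun hc => hx2 ⟨hc, fun h => hx (Set.mem_singleton_iff.mp h)⟩⟩),
              fun h => hx (Set.mem_singleton_iff.mp h)⟩
        · rintro ⟨hmem, -⟩
          rcases Set.mem_symmDiff.mp hmem with ⟨hx1, hx2⟩ | ⟨hx1, hx2⟩
          · exact Set.mem_symmDiff.mpr (Or.inl
              ⟨⟨hx1, fun h => hx (Set.mem_singleton_iff.mp h)⟩, hx2⟩)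
          · exact Set.mem_symmDiff.mpr (Or.inr ⟨hx1, fun hc => hx2 hc.1⟩)
  · -- addition case: F ⊆ F'; take β minimal in F' \ F
    rw [Set.not_nonempty_iff_eq_empty, Set.diff_eq_empty] at hFF'
    have hdfin : (F' \ F).Finite :=
      hfin.subset (fun x hx => Set.mem_symmDiff.mpr (Or.inr ⟨hx.1, hx.2⟩))
    have hdne : (F' \ F).Nonempty := by
      obtain ⟨x, hx1, hx2⟩ := Set.exists_of_ssubset (hFF'.ssubset_of_ne hne)
      exact ⟨x, hx1, hx2⟩
    obtain ⟨β, hβmem, hβmin⟩ : ∃ a ∈ F' \ F, ∀ a' ∈ F' \ F, id a' ≤ id a → id a = id a' := by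
      obtain ⟨a, ha, h⟩ := Set.Finite.exists_minimalFor id (F' \ F) hdfin hdne
      exact ⟨a, ha, fun a' ha' hle => le_antisymm (h ha' hle) hle⟩
    have hbelow : ∀ y, y < β → y ∈ F := by
      intro y hyβ
      have hyF' : y ∈ F' := hF'.1 hβmem.1 hyβ.le
      by_contra hyF
      exact hyβ.ne' (hβmin y ⟨hyF', hyF⟩ hyβ.le)
    have hid : IsIdeal (F ∪ {β}) := isIdeal_union_singleton_of_lt hF hbelow
    have hno : ¬ ∃ a, a ∈ F ∧ eps a = eps β ∧ IsIdeal (F \ {a}) := by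
      rintro ⟨a, haF, hae, haid⟩
      have hamax : ∀ x ∈ F, ¬ a < x := (isIdeal_diff_singleton_iff hF).mp haid
      have hab : a < β := by
        rcases hE.comparable a β (Or.inl hae) with h | h
        · exact lt_of_le_of_ne h (fun e => hβmem.2 (e ▸ haF))
        · exact absurd (hF haF h) hβmem.2
      have hcons : ∀ c, a < c → c < β → eps c ≠ eps a := by
        intro c hac hcβ hce
        have hcF' : c ∈ F' := hF'.1 hβmem.1 hcβ.le
        have hcF : c ∉ F := fun hc => hamax c hc hac
        exact (ne_of_gt hcβ) (hβmin c ⟨hcF', hcF⟩ hcβ.le)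
      have hsum := hE.interval a β hab hae hcons
      have hexists : ∃ c ∈ Finset.Ioo a β, A (eps a) (eps c) ≠ 0 := by
        by_contra h
        push_neg at h
        rw [Finset.sum_eq_zero h] at hsum
        norm_num at hsum
      obtain ⟨c, hc, hAc⟩ := hexists
      rw [Finset.mem_Ioo] at hc
      have hcF' : c ∈ F' := hF'.1 hβmem.1 hc.2.le
      have hcF : c ∉ F := fun h => hamax c h hc.1
      exact (ne_of_gt hc.2) (hβmin c ⟨hcF', hcF⟩ hc.2.le)
    have hFsub : F ⊆ F' := hFF'
    refine ⟨β, F ∪ {β}, Sact_eq_add hE hβmem.2 hid hno, hid,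
      Set.mem_symmDiff.mpr (Or.inr ⟨hβmem.1, hβmem.2⟩), ?_, ?_⟩
    · ext x
      constructor
      · intro hmem
        rcases Set.mem_symmDiff.mp hmem with ⟨hx1, hx2⟩ | ⟨hx1, hx2⟩
        · rcases (Set.mem_union _ _ _).mp hx1 with h1 | h1
          · exact absurd h1 hx2
          · exact h1
        · exact absurd (Set.mem_union_left _ hx1) hx2
      · intro hmem
        rw [Set.mem_singleton_iff] at hmem
        subst hmem
        exact Set.mem_symmDiff.mpr (Or.inl ⟨Set.mem_union_right _ rfl, hβmem.2⟩)
    · ext x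
      by_cases hx : x = β
      · subst hx
        constructor
        · intro hmem
          rcases Set.mem_symmDiff.mp hmem with ⟨-, h2⟩ | ⟨-, h2⟩
          · exact absurd hβmem.1 h2
          · exact absurd (Set.mem_union_right _ rfl) h2
        · rintro ⟨-, h2⟩
          exact absurd rfl h2
      · constructor
        · intro hmem
          rcases Set.mem_symmDiff.mp hmem with ⟨hx1, hx2⟩ | ⟨hx1, hx2⟩
          · rcases (Set.mem_union _ _ _).mp hx1 with h1 | h1
            · exact absurd (hFsub h1) hx2
            · exact absurd (Set.mem_singleton_iff.mp h1) hx
          · exact ⟨Set.mem_symmDiff.mpr (Or.inr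
              ⟨hx1, fun hc => hx2 (Set.mem_union_left _ hc)⟩),
              fun h => hx (Set.mem_singleton_iff.mp h)⟩
        · rintro ⟨hmem, -⟩
          rcases Set.mem_symmDiff.mp hmem with ⟨hx1, hx2⟩ | ⟨hx1, hx2⟩
          · exact absurd (hFsub hx1) hx2
          · exact Set.mem_symmDiff.mpr (Or.inr ⟨hx1, fun hc =>
              hx2 (((Set.mem_union _ _ _).mp hc).resolve_right
                (fun h => hx (Set.mem_singleton_iff.mp h)))⟩)

lemma connect_aux [Fintype P] (hA : IsGCM A) (hE : IsFullHeap A eps)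
    {F' : Set E} (hF' : IsProperIdeal eps F') :
    ∀ (n : ℕ) (F : Set E), IsIdeal F → (symmDiff F F').Finite → (symmDiff F F').ncard = n →
    ∃ l : List P, l.foldr (Sact eps) F = F' ∧
      (∀ j < l.length, ∃ β : E,
        symmDiff ((l.drop j).foldr (Sact eps) F) ((l.drop (j + 1)).foldr (Sact eps) F)
          = {β}) ∧
      (∀ p ∈ l, ∃ β ∈ symmDiff F F', eps β = p) := by
  intro n
  induction n with
  | zero =>
    intro F hF hfin hcard
    have hempty : symmDiff F F' = ∅ := (Set.ncard_eq_zero hfin).mp hcard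
    have hFF : F = F' := by
      rw [← Set.bot_eq_empty] at hempty
      exact symmDiff_eq_bot.mp hempty
    exact ⟨[], hFF, fun j hj => absurd hj (by simp), fun p hp => absurd hp (by simp)⟩
  | succ n ih =>
    intro F hF hfin hcard
    have hne : F ≠ F' := by
      intro e
      subst e
      rw [symmDiff_self, Set.bot_eq_empty, Set.ncard_empty] at hcard
      omega
    obtain ⟨β, G, hS, hGid, hβmem, hGF, hGF'⟩ := step_lemma hA hE hF hF' hfin hne
    have hfin' : (symmDiff G F').Finite := by
      rw [hGF']
      exact hfin.diff
    have hcard' : (symmDiff G F').ncard = n := by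
      rw [hGF', Set.ncard_diff_singleton_of_mem hβmem, hcard]
      omega
    obtain ⟨l, hl1, hl2, hl3⟩ := ih G hGid hfin' hcard'
    refine ⟨l ++ [eps β], ?_, ?_, ?_⟩
    · rw [List.foldr_append]
      simpa [hS] using hl1
    · intro j hj
      rw [List.length_append, List.length_singleton] at hj
      by_cases hjl : j < l.length
      · obtain ⟨γ, hγ⟩ := hl2 j hjl
        refine ⟨γ, ?_⟩
        rw [List.drop_append_of_le_length (le_of_lt hjl),
          List.drop_append_of_le_length hjl, List.foldr_append, List.foldr_append]
        simpa [hS] using hγ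
      · have hj' : j = l.length := by omega
        subst hj'
        refine ⟨β, ?_⟩
        have h1 : (l ++ [eps β]).drop l.length = [eps β] := List.drop_left
        have h2 : (l ++ [eps β]).drop (l.length + 1) = [] :=
          List.drop_eq_nil_of_le (by simp)
        rw [h1, h2]
        simpa [hS] using hGF
    · intro p hp
      rw [List.mem_append] at hp
      rcases hp with hp | hp
      · obtain ⟨γ, hγ1, hγ2⟩ := hl3 p hp
        rw [hGF'] at hγ1
        exact ⟨γ, hγ1.1, hγ2⟩
      · rw [List.mem_singleton] at hp
        subst hp
        exact ⟨β, hβmem, rfl⟩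

end StmtTwoHelpers

/-- Any two proper ideals of a full heap are connected by a
finite sequence of applications of the operators `S_p`; consecutive stages
differ by a single element, and every label used appears with nonzero
coefficient in `chi(F, F')`. -/
theorem stmt2 {P E : Type*} [Fintype P] [PartialOrder E] [LocallyFiniteOrder E]
    {A : P → P → ℤ} {eps : E → P}
    (hA : IsGCM A) (hE : IsFullHeap A eps)
    {F F' : Set E} (hF : IsProperIdeal eps F) (hF' : IsProperIdeal eps F') :
    ∃ l : List P,
      l.foldr (Sact eps) F = F' ∧
      (∀ j < l.length, ∃ β : E,
        symmDiff ((l.drop j).foldr (Sact eps) F) ((l.drop (j + 1)).foldr (Sact eps) F)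
          = {β}) ∧
      (∀ p ∈ l, chiFn eps F F' p ≠ 0) := by
  have hfin : (symmDiff F F').Finite := symmDiff_finite hE hF hF'
  obtain ⟨l, h1, h2, h3⟩ := connect_aux hA hE hF' (symmDiff F F').ncard F hF.1 hfin rfl
  refine ⟨l, h1, h2, fun p hp => ?_⟩
  obtain ⟨β, hβ, rfl⟩ := h3 p hp
  exact chi_ne_zero hE hF.1 hF'.1 hfin hβ
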